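/- arXiv:2605.30228 — 2 statements merged into one kernel-verified Lean document; each statement's English description precedes it below -/
import Mathlib

section
/- For every m ≥ 0, the map T_m(θ, λ) = (ϑ(θ)(λ + m), λ² − m²) is a bijection from (-π/2, π/2) × (m, +∞) onto (0, +∞) × (0, +∞), with inverse T_m⁻¹(a, μ) = (ϑ⁻¹(a/(√(μ + m²) + m)), √(μ + m²)). -/
open Real Set

/-- ϑ(θ) = (1 - sin θ)/cos θ -/
noncomputable def vth (θ : ℝ) : ℝ := (1 - Real.sin θ) / Real.cos θ

lemma vth_pos {θ : ℝ} (h : θ ∈ Set.Ioo (-(Real.pi / 2)) (Real.pi / 2)) : 0 < vth θ := by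
  have hc : 0 < Real.cos θ := Real.cos_pos_of_mem_Ioo h
  have hs : Real.sin θ < 1 := by
    have := Real.sin_lt_sin_of_lt_of_le_pi_div_two (by linarith [h.1]) le_rfl h.2
    simpa using this
  exact div_pos (by linarith) hc

lemma vth_surj {a : ℝ} (ha : 0 < a) :
    ∃ θ ∈ Set.Ioo (-(Real.pi / 2)) (Real.pi / 2), vth θ = a := by
  set t := Real.arctan a with ht
  have ht0 : 0 < t := by have := Real.arctan_strictMono ha; rwa [Real.arctan_zero] at this
  have ht2 : t < Real.pi / 2 := Real.arctan_lt_pi_div_two a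
  refine ⟨Real.pi / 2 - 2 * t, ⟨by linarith, by linarith⟩, ?_⟩
  have hst : 0 < Real.sin t := Real.sin_pos_of_pos_of_lt_pi ht0 (by linarith [Real.pi_pos])
  have hct : 0 < Real.cos t := Real.cos_pos_of_mem_Ioo ⟨by linarith, ht2⟩
  have h1 : Real.sin (Real.pi / 2 - 2 * t) = Real.cos (2 * t) := Real.sin_pi_div_two_sub _
  have h2 : Real.cos (Real.pi / 2 - 2 * t) = Real.sin (2 * t) := Real.cos_pi_div_two_sub _
  have htan : Real.sin t / Real.cos t = a := by
    rw [← Real.tan_eq_sin_div_cos, ht, Real.tan_arctan]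
  rw [vth, h1, h2, Real.cos_two_mul', Real.sin_two_mul, ← htan]
  have hpyth := Real.sin_sq_add_cos_sq t
  field_simp
  ring_nf
  nlinarith [hpyth]

theorem stmt_3 (m : ℝ) (hm : 0 ≤ m)
    (vthInv : ℝ → ℝ)
    (hInv : Set.InvOn vthInv vth (Set.Ioo (-(Real.pi / 2)) (Real.pi / 2)) (Set.Ioi 0)) :
    Set.BijOn (fun p : ℝ × ℝ => (vth p.1 * (p.2 + m), p.2 ^ 2 - m ^ 2))
      ((Set.Ioo (-(Real.pi / 2)) (Real.pi / 2)) ×ˢ (Set.Ioi m))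
      ((Set.Ioi (0 : ℝ)) ×ˢ (Set.Ioi (0 : ℝ))) ∧
    Set.InvOn
      (fun q : ℝ × ℝ =>
        (vthInv (q.1 / (Real.sqrt (q.2 + m ^ 2) + m)), Real.sqrt (q.2 + m ^ 2)))
      (fun p : ℝ × ℝ => (vth p.1 * (p.2 + m), p.2 ^ 2 - m ^ 2))
      ((Set.Ioo (-(Real.pi / 2)) (Real.pi / 2)) ×ˢ (Set.Ioi m))
      ((Set.Ioi (0 : ℝ)) ×ˢ (Set.Ioi (0 : ℝ))) := by
  set I := Set.Ioo (-(Real.pi / 2)) (Real.pi / 2)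
  -- forward MapsTo
  have hMapsTo : Set.MapsTo (fun p : ℝ × ℝ => (vth p.1 * (p.2 + m), p.2 ^ 2 - m ^ 2))
      (I ×ˢ (Set.Ioi m)) ((Set.Ioi (0 : ℝ)) ×ˢ (Set.Ioi (0 : ℝ))) := by
    rintro ⟨θ, l⟩ ⟨hθ, hl⟩
    have hl' : m < l := hl
    constructor
    · exact mul_pos (vth_pos hθ) (by dsimp only; linarith)
    · simp only [Set.mem_Ioi]
      nlinarith
  -- inverse MapsTo
  have hMapsToInv : Set.MapsTo (fun q : ℝ × ℝ =>
      (vthInv (q.1 / (Real.sqrt (q.2 + m ^ 2) + m)), Real.sqrt (q.2 + m ^ 2)))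
      ((Set.Ioi (0 : ℝ)) ×ˢ (Set.Ioi (0 : ℝ))) (I ×ˢ (Set.Ioi m)) := by
    rintro ⟨a, μ⟩ ⟨ha, hμ⟩
    simp only [Set.mem_Ioi] at ha hμ
    have hs : 0 < Real.sqrt (μ + m ^ 2) := Real.sqrt_pos.2 (by nlinarith)
    have hx : 0 < a / (Real.sqrt (μ + m ^ 2) + m) := div_pos ha (by linarith)
    obtain ⟨θ, hθI, hθ⟩ := vth_surj hx
    constructor
    · show vthInv _ ∈ I
      rw [← hθ, hInv.1 hθI]
      exact hθI
    · show m < Real.sqrt (μ + m ^ 2)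
      calc m = Real.sqrt (m ^ 2) := by rw [Real.sqrt_sq hm]
        _ < Real.sqrt (μ + m ^ 2) := Real.sqrt_lt_sqrt (by positivity) (by linarith)
  have hInvOn : Set.InvOn
      (fun q : ℝ × ℝ =>
        (vthInv (q.1 / (Real.sqrt (q.2 + m ^ 2) + m)), Real.sqrt (q.2 + m ^ 2)))
      (fun p : ℝ × ℝ => (vth p.1 * (p.2 + m), p.2 ^ 2 - m ^ 2))
      (I ×ˢ (Set.Ioi m)) ((Set.Ioi (0 : ℝ)) ×ˢ (Set.Ioi (0 : ℝ))) := by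
    constructor
    · rintro ⟨θ, l⟩ ⟨hθ, hl⟩
      simp only [Set.mem_Ioi] at hl
      have hl0 : 0 < l := lt_of_le_of_lt hm hl
      have hsq : Real.sqrt (l ^ 2 - m ^ 2 + m ^ 2) = l := by
        rw [show l ^ 2 - m ^ 2 + m ^ 2 = l ^ 2 by ring, Real.sqrt_sq hl0.le]
      simp only [Prod.mk.injEq]
      rw [hsq]
      refine ⟨?_, rfl⟩
      rw [mul_div_assoc, div_self (by linarith), mul_one, hInv.1 hθ]
    · rintro ⟨a, μ⟩ ⟨ha, hμ⟩
      simp only [Set.mem_Ioi] at ha hμ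
      have hs : 0 < Real.sqrt (μ + m ^ 2) := Real.sqrt_pos.2 (by nlinarith)
      have hx : 0 < a / (Real.sqrt (μ + m ^ 2) + m) := div_pos ha (by linarith)
      simp only [Prod.mk.injEq]
      constructor
      · rw [hInv.2 hx, div_mul_cancel₀ _ (by linarith : Real.sqrt (μ + m ^ 2) + m ≠ 0)]
      · rw [Real.sq_sqrt (by nlinarith : (0:ℝ) ≤ μ + m ^ 2)]
        ring
  exact ⟨hInvOn.bijOn hMapsTo hMapsToInv, hInvOn⟩
end

section
/- Let μ : (0, ∞) → ℝ be continuous, strictly concave, with μ(a) → 0 as a → 0⁺, μ strictly increasing with range (0, Λ) for some Λ > 0, and positive slope at the origin S := lim_{a→0⁺} μ(a)/a > 0. Let m ≥ 0, v > 0, and p(a) = (a/v − m)² − m². Then there exists a unique a⋆ > 0 with μ(a⋆) = p(a⋆). -/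
open Real Set Filter Topology

theorem stmt_4 (μ : ℝ → ℝ) (Λ S m v : ℝ)
    (hΛ : 0 < Λ) (hm : 0 ≤ m) (hv : 0 < v)
    (hcont : ContinuousOn μ (Set.Ioi 0))
    (hmono : StrictMonoOn μ (Set.Ioi 0))
    (hconc : StrictConcaveOn ℝ (Set.Ioi 0) μ)
    (hbij : Set.BijOn μ (Set.Ioi 0) (Set.Ioo 0 Λ))
    (h0 : Filter.Tendsto μ (nhdsWithin 0 (Set.Ioi 0)) (nhds 0))
    (hslope : Filter.Tendsto (fun a => μ a / a) (nhdsWithin 0 (Set.Ioi 0)) (nhds S))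
    (hS : 0 < S) :
    ∃! a : ℝ, a ∈ Set.Ioi (0 : ℝ) ∧ μ a = (a / v - m) ^ 2 - m ^ 2 := by
  set p : ℝ → ℝ := fun a => (a / v - m) ^ 2 - m ^ 2 with hp_def
  set f : ℝ → ℝ := fun a => μ a - p a with hf_def
  have hv' : v ≠ 0 := ne_of_gt hv
  -- f is eventually positive near 0 from the right
  have htid : Tendsto (fun a : ℝ => a) (𝓝[>] (0:ℝ)) (𝓝 0) :=
    tendsto_id.mono_left nhdsWithin_le_nhds
  have hT : Tendsto (fun a => μ a / a - a / v ^ 2 + 2 * m / v) (𝓝[>] (0:ℝ))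
      (𝓝 (S - 0 / v ^ 2 + 2 * m / v)) :=
    (hslope.sub (htid.div_const _)).add tendsto_const_nhds
  have hTpos : 0 < S - 0 / v ^ 2 + 2 * m / v := by
    have : 0 ≤ 2 * m / v := by positivity
    simp only [zero_div, sub_zero]
    linarith
  have hposEv : ∀ᶠ a in 𝓝[>] (0:ℝ), 0 < f a := by
    filter_upwards [hT.eventually (eventually_gt_nhds hTpos), self_mem_nhdsWithin]
      with a hTa (ha : 0 < a)
    have ha' : a ≠ 0 := ne_of_gt ha
    have key : f a = a * (μ a / a - a / v ^ 2 + 2 * m / v) := by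
      simp only [hf_def, hp_def]
      field_simp
      ring
    rw [key]
    exact mul_pos ha hTa
  -- p is convex on Ioi 0
  have hpconv : ConvexOn ℝ (Set.Ioi (0:ℝ)) p := by
    refine ⟨convex_Ioi 0, fun x _ y _ a b ha hb hab => ?_⟩
    simp only [hp_def, smul_eq_mul]
    have hb1 : b = 1 - a := by linarith
    subst hb1
    have h1 : 0 ≤ a * (1 - a) * ((x - y) / v) ^ 2 := by positivity
    have hkey : a * ((x / v - m) ^ 2 - m ^ 2) + (1 - a) * ((y / v - m) ^ 2 - m ^ 2)
        - (((a * x + (1 - a) * y) / v - m) ^ 2 - m ^ 2)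
        = a * (1 - a) * ((x - y) / v) ^ 2 := by
      field_simp
      ring
    linarith
  have hfconc : StrictConcaveOn ℝ (Set.Ioi (0:ℝ)) f := hconc.sub_convexOn hpconv
  -- uniqueness core: no two distinct positive zeros
  have key2 : ∀ x y : ℝ, 0 < x → x < y → f x = 0 → f y = 0 → False := by
    intro x y hx0 hxy hfx hfy
    obtain ⟨z, ⟨hz1, hzx⟩, hz0⟩ :=
      ((hposEv.and ((eventually_lt_nhds hx0).filter_mono nhdsWithin_le_nhds)).and
        self_mem_nhdsWithin).exists
    have hz0' : (0:ℝ) < z := hz0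
    have hzy : z < y := by linarith
    set t : ℝ := (y - x) / (y - z) with ht_def
    have hyz : (0:ℝ) < y - z := by linarith
    have ht : 0 < t := div_pos (by linarith) hyz
    have ht1 : t < 1 := by
      rw [ht_def, div_lt_one hyz]; linarith
    have hcomb : t * z + (1 - t) * y = x := by
      rw [ht_def]; field_simp; ring
    have := hfconc.2 (Set.mem_Ioi.mpr hz0') (Set.mem_Ioi.mpr (by linarith : (0:ℝ) < y))
      (by linarith : z ≠ y) ht (by linarith : 0 < 1 - t) (by ring)
    simp only [smul_eq_mul, hcomb, hfx, hfy, mul_zero, add_zero] at this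
    nlinarith
  -- the large point b where f < 0
  set b : ℝ := v * (m + Real.sqrt (Λ + m ^ 2)) with hb_def
  have hsq : 0 < Real.sqrt (Λ + m ^ 2) := Real.sqrt_pos.mpr (by positivity)
  have hb0 : 0 < b := by
    apply mul_pos hv; linarith
  have hpb : p b = Λ := by
    have : b / v - m = Real.sqrt (Λ + m ^ 2) := by
      rw [hb_def]; field_simp; ring
    simp only [hp_def, this, Real.sq_sqrt (by positivity : (0:ℝ) ≤ Λ + m ^ 2)]
    ring
  have hfb : f b < 0 := by
    have hμb : μ b < Λ := (hbij.mapsTo (Set.mem_Ioi.mpr hb0)).2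
    simp only [hf_def, hpb]; linarith
  -- small point a₀ where f > 0 and a₀ < b
  obtain ⟨a₀, ⟨hfa₀, ha₀b⟩, ha₀0⟩ :=
    ((hposEv.and ((eventually_lt_nhds hb0).filter_mono nhdsWithin_le_nhds)).and
      self_mem_nhdsWithin).exists
  have ha₀0' : (0:ℝ) < a₀ := ha₀0
  -- IVT
  have hfc : ContinuousOn f (Set.Icc a₀ b) := by
    apply ContinuousOn.sub
    · exact hcont.mono (fun x hx => lt_of_lt_of_le ha₀0' hx.1)
    · exact (Continuous.continuousOn (by continuity))
  have hIoo : (0:ℝ) ∈ Set.Ioo (f b) (f a₀) := ⟨hfb, hfa₀⟩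
  obtain ⟨c, hcmem, hfc0⟩ := intermediate_value_Ioo' (le_of_lt ha₀b) hfc hIoo
  have hc0 : (0:ℝ) < c := lt_trans ha₀0' hcmem.1
  refine ⟨c, ⟨Set.mem_Ioi.mpr hc0, ?_⟩, ?_⟩
  · have : f c = 0 := hfc0
    simp only [hf_def, hp_def] at this
    linarith
  · rintro y ⟨hy0, hy⟩
    have hfy : f y = 0 := by simp only [hf_def, hp_def]; linarith [hy]
    have hfc0' : f c = 0 := hfc0
    rcases lt_trichotomy y c with h | h | h
    · exact absurd (key2 y c hy0 h hfy hfc0') (fun h => h)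
    · exact h
    · exact absurd (key2 c y hc0 h hfc0' hfy) (fun h => h)
end
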